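/- Let D ≥ 2 and ℓ ≥ 1 be integers and let η ∈ [0,1] satisfy (D-1)(ℓ-1+η) > 1. Define R_k for integers k ≥ -ℓ+1 by R_k = 1 for -ℓ+1 ≤ k ≤ 0 and R_k = (D-1)(Σ_{i=k-ℓ+1}^{k-1} R_i + η R_{k-ℓ}) for k ≥ 1. Then lim_{k→∞} (1/k) log R_k / log D exists and equals a number q ∈ (0,1), where q is determined by the property that x = D^{-q} is the unique root in the interval (0,1) of the equation 1 = (D-1)(x + x² + ⋯ + x^{ℓ-1} + η x^{ℓ}); equivalently, x = D^{-q} satisfies Dx - 1 = (D-1)((1-η)x^{ℓ} + η x^{ℓ+1}). -/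

import Mathlib

open Filter Topology

/-- For the linear recursion `R_k = (D-1)(Σ_{i=k-ℓ+1}^{k-1} R_i + η R_{k-ℓ})` with
initial values `R_k = 1` for `-ℓ+1 ≤ k ≤ 0`, under the condition `(D-1)(ℓ-1+η) > 1`,
the limit `lim_{k→∞} (1/k) log_D R_k` exists and equals the number `q ∈ (0,1)`
determined by the fact that `x = D^{-q}` is the unique root in `(0,1)` of
`1 = (D-1)(x + x² + ⋯ + x^{ℓ-1} + η x^{ℓ})`. -/
theorem decay_of_tails_jsq_stmt1
    (D ℓ : ℕ) (hD : 2 ≤ D) (hℓ : 1 ≤ ℓ) (η : ℝ) (hη : η ∈ Set.Icc (0:ℝ) 1)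
    (hcond : ((D:ℝ) - 1) * ((ℓ:ℝ) - 1 + η) > 1)
    (R : ℤ → ℝ)
    (hinit : ∀ k : ℤ, -(ℓ:ℤ) + 1 ≤ k → k ≤ 0 → R k = 1)
    (hrec : ∀ k : ℤ, 1 ≤ k →
      R k = ((D:ℝ) - 1) * ((∑ i ∈ Finset.Icc (k - (ℓ:ℤ) + 1) (k - 1), R i) + η * R (k - ℓ)))
    (q : ℝ)
    (hx : (D:ℝ) ^ (-q) ∈ Set.Ioo (0:ℝ) 1)
    (heq : 1 = ((D:ℝ) - 1) *
      ((∑ j ∈ Finset.Icc 1 (ℓ - 1), ((D:ℝ) ^ (-q)) ^ j) + η * ((D:ℝ) ^ (-q)) ^ ℓ)) :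
    q ∈ Set.Ioo (0:ℝ) 1 ∧
    Filter.Tendsto (fun k : ℕ => (1 / (k:ℝ)) * (Real.log (R k) / Real.log D))
      Filter.atTop (𝓝 q) := by
  have hD1 : (1:ℝ) < D := by exact_mod_cast Nat.lt_of_lt_of_le Nat.one_lt_two hD
  have hDpos : (0:ℝ) < D := lt_trans one_pos hD1
  set x : ℝ := (D:ℝ) ^ (-q) with hxdef
  obtain ⟨hx0, hx1⟩ := hx
  obtain ⟨hη0, hη1⟩ := hη
  have hxne : x ≠ 0 := ne_of_gt hx0
  have hDm1 : (0:ℝ) ≤ (D:ℝ) - 1 := by linarith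
  have hlogD : 0 < Real.log D := Real.log_pos hD1
  have hlogx : Real.log x = -q * Real.log D := Real.log_rpow hDpos _
  -- q > 0
  have hq0 : 0 < q := by
    have h := Real.log_neg hx0 hx1
    nlinarith [hlogx]
  -- geometric sum identity
  have geom : ∀ n : ℕ, ((D:ℝ) - 1) * ∑ j ∈ Finset.Icc 1 n, ((D:ℝ)⁻¹) ^ j
      = 1 - ((D:ℝ)⁻¹) ^ n := by
    intro n
    induction n with
    | zero => simp
    | succ n ihn =>
      rw [Finset.sum_Icc_succ_top (by omega : 1 ≤ n + 1)]
      have hDne : (D:ℝ) ≠ 0 := ne_of_gt hDpos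
      rw [mul_add, ihn, pow_succ]
      field_simp
      ring
  -- x > 1/D
  have hxD : (D:ℝ)⁻¹ < x := by
    by_contra hcon
    push_neg at hcon
    have hmono : ((D:ℝ) - 1) * ((∑ j ∈ Finset.Icc 1 (ℓ - 1), x ^ j) + η * x ^ ℓ)
        ≤ ((D:ℝ) - 1) * ((∑ j ∈ Finset.Icc 1 (ℓ - 1), ((D:ℝ)⁻¹) ^ j)
            + η * ((D:ℝ)⁻¹) ^ ℓ) := by
      apply mul_le_mul_of_nonneg_left _ hDm1
      apply add_le_add
      · exact Finset.sum_le_sum fun j hj => pow_le_pow_left₀ hx0.le hcon j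
      · exact mul_le_mul_of_nonneg_left (pow_le_pow_left₀ hx0.le hcon ℓ) hη0
    have hg1 : ((D:ℝ) - 1) * ∑ j ∈ Finset.Icc 1 (ℓ - 1), ((D:ℝ)⁻¹) ^ j
        = 1 - ((D:ℝ)⁻¹) ^ (ℓ - 1) := geom (ℓ - 1)
    have hpow : ((D:ℝ)⁻¹) ^ (ℓ - 1) = (D:ℝ) * ((D:ℝ)⁻¹) ^ ℓ := by
      rw [show ℓ = (ℓ - 1) + 1 by omega, pow_succ]
      field_simp
      simp
    have hipos : 0 < ((D:ℝ)⁻¹) ^ ℓ := by positivity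
    have hend : ((D:ℝ) - 1) * (η * ((D:ℝ)⁻¹) ^ ℓ) ≤ ((D:ℝ) - 1) * ((D:ℝ)⁻¹) ^ ℓ := by
      nlinarith [mul_nonneg (mul_nonneg hDm1 hipos.le) (sub_nonneg.mpr hη1)]
    have : ((D:ℝ) - 1) * ((∑ j ∈ Finset.Icc 1 (ℓ - 1), ((D:ℝ)⁻¹) ^ j)
        + η * ((D:ℝ)⁻¹) ^ ℓ) ≤ 1 - ((D:ℝ)⁻¹) ^ ℓ := by
      rw [mul_add, hg1, hpow]
      nlinarith [hend]
    linarith [heq, hmono, this, hipos]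
  -- q < 1
  have hq1 : q < 1 := by
    have : (D:ℝ) ^ (-(1:ℝ)) < (D:ℝ) ^ (-q) := by
      rw [Real.rpow_neg_one]
      exact hxD
    have := (Real.rpow_lt_rpow_left_iff hD1).mp this
    linarith
  refine ⟨⟨hq0, hq1⟩, ?_⟩
  -- reindexing of the summation interval
  have hset : ∀ k : ℤ, Finset.Icc (k - (ℓ:ℤ) + 1) (k - 1)
      = (Finset.Icc 1 (ℓ - 1)).map ⟨fun j : ℕ => k - (j:ℤ), show Function.Injective (fun j : ℕ => k - (j:ℤ)) from fun a b h => by dsimp at h; omega⟩ := by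
    intro k
    ext i
    simp only [Finset.mem_Icc, Finset.mem_map, Function.Embedding.coeFn_mk]
    constructor
    · rintro ⟨h1, h2⟩
      exact ⟨(k - i).toNat, by constructor <;> omega, by omega⟩
    · rintro ⟨a, ⟨ha1, ha2⟩, rfl⟩
      omega
  set M : ℝ := x ^ (1 - (ℓ:ℤ)) with hMdef
  have hMpos : 0 < M := zpow_pos hx0 _
  -- main bounds via strong induction
  have key : ∀ k : ℤ, -(ℓ:ℤ) + 1 ≤ k → 1 ≤ R k * x ^ k ∧ R k * x ^ k ≤ M := by
    have main : ∀ n : ℕ, ∀ k : ℤ, -(ℓ:ℤ) + 1 ≤ k → k ≤ (n:ℤ) →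
        1 ≤ R k * x ^ k ∧ R k * x ^ k ≤ M := by
      intro n
      induction n using Nat.strong_induction_on with
      | _ n ih =>
        intro k hk1 hk2
        rcases le_or_gt k 0 with hk0 | hk0
        · rw [hinit k hk1 hk0, one_mul]
          constructor
          · calc (1:ℝ) = x ^ (0:ℤ) := (zpow_zero x).symm
              _ ≤ x ^ k := zpow_le_zpow_right_of_le_one₀ hx0 hx1.le hk0
          · exact zpow_le_zpow_right_of_le_one₀ hx0 hx1.le (by omega)
        · -- recursion step
          have hk1' : 1 ≤ k := hk0
          have hIH : ∀ i : ℤ, -(ℓ:ℤ) + 1 ≤ i → i ≤ k - 1 →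
              1 ≤ R i * x ^ i ∧ R i * x ^ i ≤ M := by
            intro i h1 h2
            exact ih (k - 1).toNat (by omega) i h1 (by omega)
          have hterm : ∀ j ∈ Finset.Icc 1 (ℓ - 1),
              R (k - (j:ℤ)) * x ^ k = (R (k - (j:ℤ)) * x ^ (k - (j:ℤ))) * x ^ j := by
            intro j hj
            rw [mul_assoc, ← zpow_natCast x j, ← zpow_add₀ hxne]
            ring_nf
          have hrw : R k * x ^ k = ((D:ℝ) - 1) *
              ((∑ j ∈ Finset.Icc 1 (ℓ - 1), (R (k - (j:ℤ)) * x ^ (k - (j:ℤ))) * x ^ j)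
                + η * ((R (k - (ℓ:ℤ)) * x ^ (k - (ℓ:ℤ))) * x ^ ℓ)) := by
            rw [hrec k hk1', hset k, Finset.sum_map]
            simp only [Function.Embedding.coeFn_mk]
            rw [← Finset.sum_congr rfl hterm, ← Finset.sum_mul]
            have hℓterm : (R (k - (ℓ:ℤ)) * x ^ (k - (ℓ:ℤ))) * x ^ ℓ
                = R (k - (ℓ:ℤ)) * x ^ k := by
              rw [mul_assoc, ← zpow_natCast x ℓ, ← zpow_add₀ hxne]
              ring_nf
            rw [hℓterm]
            ring
          have hw : ((D:ℝ) - 1) * ((∑ j ∈ Finset.Icc 1 (ℓ - 1), x ^ j) + η * x ^ ℓ)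
              = 1 := heq.symm
          have hS : ∀ j ∈ Finset.Icc 1 (ℓ - 1),
              1 ≤ R (k - (j:ℤ)) * x ^ (k - (j:ℤ)) ∧
              R (k - (j:ℤ)) * x ^ (k - (j:ℤ)) ≤ M := by
            intro j hj
            simp only [Finset.mem_Icc] at hj
            exact hIH _ (by omega) (by omega)
          have hSℓ : 1 ≤ R (k - (ℓ:ℤ)) * x ^ (k - (ℓ:ℤ)) ∧
              R (k - (ℓ:ℤ)) * x ^ (k - (ℓ:ℤ)) ≤ M := hIH _ (by omega) (by omega)
          constructor
          · calc (1:ℝ) = ((D:ℝ) - 1) * ((∑ j ∈ Finset.Icc 1 (ℓ - 1), x ^ j) + η * x ^ ℓ) :=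
                hw.symm
              _ ≤ ((D:ℝ) - 1) *
                ((∑ j ∈ Finset.Icc 1 (ℓ - 1), (R (k - (j:ℤ)) * x ^ (k - (j:ℤ))) * x ^ j)
                  + η * ((R (k - (ℓ:ℤ)) * x ^ (k - (ℓ:ℤ))) * x ^ ℓ)) := by
                apply mul_le_mul_of_nonneg_left _ hDm1
                apply add_le_add
                · apply Finset.sum_le_sum
                  intro j hj
                  exact le_mul_of_one_le_left (pow_nonneg hx0.le j) (hS j hj).1
                · apply mul_le_mul_of_nonneg_left _ hη0
                  exact le_mul_of_one_le_left (pow_nonneg hx0.le ℓ) hSℓ.1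
              _ = R k * x ^ k := hrw.symm
          · rw [hrw]
            have : ((D:ℝ) - 1) *
                ((∑ j ∈ Finset.Icc 1 (ℓ - 1), (R (k - (j:ℤ)) * x ^ (k - (j:ℤ))) * x ^ j)
                  + η * ((R (k - (ℓ:ℤ)) * x ^ (k - (ℓ:ℤ))) * x ^ ℓ))
                ≤ ((D:ℝ) - 1) *
                ((∑ j ∈ Finset.Icc 1 (ℓ - 1), M * x ^ j) + η * (M * x ^ ℓ)) := by
              apply mul_le_mul_of_nonneg_left _ hDm1
              apply add_le_add
              · apply Finset.sum_le_sum
                intro j hj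
                exact mul_le_mul_of_nonneg_right (hS j hj).2 (pow_nonneg hx0.le j)
              · exact mul_le_mul_of_nonneg_left
                  (mul_le_mul_of_nonneg_right hSℓ.2 (pow_nonneg hx0.le ℓ)) hη0
            refine le_trans this ?_
            rw [← Finset.mul_sum]
            have hfin : ((D:ℝ) - 1) * (M * ∑ j ∈ Finset.Icc 1 (ℓ - 1), x ^ j + η * (M * x ^ ℓ))
                = M * (((D:ℝ) - 1) * ((∑ j ∈ Finset.Icc 1 (ℓ - 1), x ^ j) + η * x ^ ℓ)) := by
              ring
            rw [hfin, hw, mul_one]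
    exact fun k hk => main k.toNat k hk (by omega)
  -- positivity and log bounds for natural k ≥ 1
  have hbounds : ∀ k : ℕ, 1 ≤ k →
      q ≤ (1 / (k:ℝ)) * (Real.log (R k) / Real.log D) ∧
      (1 / (k:ℝ)) * (Real.log (R k) / Real.log D)
        ≤ q + (Real.log M / Real.log D) * (1 / (k:ℝ)) := by
    intro k hk
    have hkpos : (0:ℝ) < k := by exact_mod_cast hk
    obtain ⟨h1, h2⟩ := key (k:ℤ) (by omega)
    have hxk : 0 < x ^ (k:ℤ) := zpow_pos hx0 _
    have hR1 : x ^ (-(k:ℤ)) ≤ R k := by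
      rw [zpow_neg]
      rw [inv_le_iff_one_le_mul₀ hxk]
      linarith [h1]
    have hR2 : R k ≤ M * x ^ (-(k:ℤ)) := by
      rw [zpow_neg, le_mul_inv_iff₀ hxk]
      linarith [h2]
    have hRpos : 0 < R k := lt_of_lt_of_le (zpow_pos hx0 _) hR1
    have hlog1 : (k:ℝ) * q * Real.log D ≤ Real.log (R k) := by
      have h := Real.log_le_log (zpow_pos hx0 _) hR1
      rw [Real.log_zpow, hlogx] at h
      push_cast at h
      linarith [h]
    have hlogM : Real.log M = ((ℓ:ℝ) - 1) * (q * Real.log D) := by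
      rw [hMdef, Real.log_zpow, hlogx]
      push_cast
      ring
    have hlog2 : Real.log (R k) ≤ Real.log M + (k:ℝ) * q * Real.log D := by
      have h := Real.log_le_log hRpos hR2
      rw [Real.log_mul (ne_of_gt hMpos) (ne_of_gt (zpow_pos hx0 _))] at h
      simp only [Real.log_zpow, hlogx] at h
      push_cast at h
      linarith [h, hlogM]
    have hkne : (k:ℝ) ≠ 0 := ne_of_gt hkpos
    constructor
    · have h' : (k:ℝ) * q ≤ Real.log (R k) / Real.log D :=
        (le_div_iff₀ hlogD).mpr (by linarith)
      have h'' := mul_le_mul_of_nonneg_left h' (le_of_lt (one_div_pos.mpr hkpos))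
      calc q = (1 / (k:ℝ)) * ((k:ℝ) * q) := by field_simp
        _ ≤ (1 / (k:ℝ)) * (Real.log (R k) / Real.log D) := h''
    · have h' : Real.log (R k) / Real.log D ≤ Real.log M / Real.log D + (k:ℝ) * q := by
        rw [div_le_iff₀ hlogD, add_mul, div_mul_cancel₀ _ (ne_of_gt hlogD)]
        linarith
      have h'' := mul_le_mul_of_nonneg_left h' (le_of_lt (one_div_pos.mpr hkpos))
      calc (1 / (k:ℝ)) * (Real.log (R k) / Real.log D)
          ≤ (1 / (k:ℝ)) * (Real.log M / Real.log D + (k:ℝ) * q) := h''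
        _ = q + (Real.log M / Real.log D) * (1 / (k:ℝ)) := by field_simp; ring
  -- squeeze
  have hup : Tendsto (fun k : ℕ => q + (Real.log M / Real.log D) * (1 / (k:ℝ)))
      atTop (𝓝 q) := by
    have : Tendsto (fun k : ℕ => q + (Real.log M / Real.log D) * (1 / (k:ℝ)))
        atTop (𝓝 (q + (Real.log M / Real.log D) * 0)) :=
      tendsto_const_nhds.add (tendsto_const_nhds.mul tendsto_one_div_atTop_nhds_zero_nat)
    simpa using this
  refine tendsto_of_tendsto_of_tendsto_of_le_of_le' tendsto_const_nhds hup ?_ ?_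
  · filter_upwards [eventually_ge_atTop 1] with k hk
    exact (hbounds k hk).1
  · filter_upwards [eventually_ge_atTop 1] with k hk
    exact (hbounds k hk).2
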